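/- arXiv:2310.11136 — 2 statements merged into one kernel-verified Lean document; each statement's English description precedes it below -/
import Mathlib

section
/- Termination of AUnif: there is no infinite sequence C0 ⟹ C1 ⟹ ⋯ of AUnif rule applications starting from a configuration; moreover, for every configuration C, the set AUnif(C) of final configurations reachable from C by exhaustive rule application is finite. -/
/- Common development: first-order terms, absorption theories, anti-unification
   equations, configurations and the AUnif transformation rules. -/

namespace AbsAU

/-- First-order terms over a set `F` of function symbols, with variables drawn
from the countably infinite set `ℕ`. -/
inductive Tm (F : Type) : Type where
  | var : ℕ → Tm F
  | app : F → List (Tm F) → Tm F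

namespace Tm

variable {F : Type}

/-- Application of a substitution (given as a total map on variables) to a term. -/
def subst (σ : ℕ → Tm F) : Tm F → Tm F
  | var x => σ x
  | app f ts => app f (ts.attach.map fun t => subst σ t.1)
decreasing_by
  have := List.sizeOf_lt_of_mem t.2
  simp only [Tm.app.sizeOf_spec]
  omega

/-- The head of a term: a variable or a function symbol. -/
def head : Tm F → ℕ ⊕ F
  | var x => Sum.inl x
  | app f _ => Sum.inr f

end Tm

/-- `VarIn x t` holds iff the variable `x` occurs in the term `t`. -/
inductive VarIn {F : Type} : ℕ → Tm F → Prop where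
  | var (x : ℕ) : VarIn x (.var x)
  | app {x : ℕ} {t : Tm F} (f : F) {ts : List (Tm F)} :
      t ∈ ts → VarIn x t → VarIn x (.app f ts)

/-- `SymOcc f t` holds iff the function symbol `f` occurs in the term `t`. -/
inductive SymOcc {F : Type} (f : F) : Tm F → Prop where
  | head (ts : List (Tm F)) : SymOcc f (.app f ts)
  | arg {t : Tm F} (g : F) {ts : List (Tm F)} :
      t ∈ ts → SymOcc f t → SymOcc f (.app g ts)

/-- Signature data: an arity for every symbol and the distinguished wild card
constant `⋆`. -/
structure AbsSig (F : Type) where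
  arity : F → ℕ
  star : F
  star_arity : arity star = 0

/-- Arity-respecting (well-formed) terms. -/
inductive WFT {F : Type} (Sg : AbsSig F) : Tm F → Prop where
  | var (x : ℕ) : WFT Sg (.var x)
  | app {f : F} {ts : List (Tm F)} :
      ts.length = Sg.arity f → (∀ t ∈ ts, WFT Sg t) → WFT Sg (.app f ts)

/-- An absorption theory: finitely many pairs `(f, ε_f)` of a binary symbol
together with its absorption constant, all chosen symbols pairwise distinct and
distinct from the wild card. -/
structure AbsTh {F : Type} (Sg : AbsSig F) where
  pairs : Set (F × F)
  finite : pairs.Finite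
  binary : ∀ p ∈ pairs, Sg.arity p.1 = 2
  constZ : ∀ p ∈ pairs, Sg.arity p.2 = 0
  distinct : ∀ p ∈ pairs, ∀ q ∈ pairs, p ≠ q →
      p.1 ≠ q.1 ∧ p.1 ≠ q.2 ∧ p.2 ≠ q.1 ∧ p.2 ≠ q.2
  ne : ∀ p ∈ pairs, p.1 ≠ p.2
  star_ne : ∀ p ∈ pairs, Sg.star ≠ p.1 ∧ Sg.star ≠ p.2

variable {F : Type}

/-- `≈_Abs` : the least congruence on terms containing all substitution
instances of the absorption axioms `f(ε_f, x) ≈ ε_f` and `f(x, ε_f) ≈ ε_f`. -/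
inductive AbsEq {Sg : AbsSig F} (Th : AbsTh Sg) : Tm F → Tm F → Prop where
  | absL {f e : F} (t : Tm F) : (f, e) ∈ Th.pairs →
      AbsEq Th (.app f [.app e [], t]) (.app e [])
  | absR {f e : F} (t : Tm F) : (f, e) ∈ Th.pairs →
      AbsEq Th (.app f [t, .app e []]) (.app e [])
  | refl (t : Tm F) : AbsEq Th t t
  | symm {s t : Tm F} : AbsEq Th s t → AbsEq Th t s
  | trans {s t u : Tm F} : AbsEq Th s t → AbsEq Th t u → AbsEq Th s u
  | congr (f : F) {ss ts : List (Tm F)} :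
      List.Forall₂ (AbsEq Th) ss ts → AbsEq Th (.app f ss) (.app f ts)

/-- The domain of a substitution. -/
def Dom (σ : ℕ → Tm F) : Set ℕ := {x | σ x ≠ .var x}

/-- A substitution proper has a finite domain. -/
def FinDom (σ : ℕ → Tm F) : Prop := (Dom σ).Finite

/-- The variables occurring in the range of a substitution. -/
def Rvar (σ : ℕ → Tm F) : Set ℕ := {y | ∃ x ∈ Dom σ, VarIn y (σ x)}

/-- `r ≲_Abs s` : `r` is more general than `s` modulo the absorption theory. -/
def MoreGen {Sg : AbsSig F} (Th : AbsTh Sg) (r s : Tm F) : Prop :=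
  ∃ σ : ℕ → Tm F, FinDom σ ∧ AbsEq Th (r.subst σ) s

/-- `r` is an `Abs`-generalization of `s` and `t`. -/
def Gen {Sg : AbsSig F} (Th : AbsTh Sg) (r s t : Tm F) : Prop :=
  MoreGen Th r s ∧ MoreGen Th r t

/-- The set of all `Abs`-generalizations of `s` and `t`. -/
def GAbs {Sg : AbsSig F} (Th : AbsTh Sg) (s t : Tm F) : Set (Tm F) :=
  {r | Gen Th r s t}

/-- `M` is a minimal complete set of `Abs`-generalizations of `s` and `t`. -/
def IsMCSG {Sg : AbsSig F} (Th : AbsTh Sg) (M : Set (Tm F)) (s t : Tm F) : Prop :=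
  M ⊆ GAbs Th s t ∧
  (∀ r ∈ GAbs Th s t, ∃ r' ∈ M, MoreGen Th r r') ∧
  (∀ r ∈ M, ∀ r' ∈ M, MoreGen Th r r' → r = r')

/-- `Abs`-normal forms: no absorption constant occurs as an argument of its
absorption symbol. -/
inductive NF {Sg : AbsSig F} (Th : AbsTh Sg) : Tm F → Prop where
  | var (x : ℕ) : NF Th (.var x)
  | app {f : F} {ts : List (Tm F)} :
      (∀ t ∈ ts, NF Th t) →
      (∀ e : F, (f, e) ∈ Th.pairs → Tm.app e [] ∉ ts) →
      NF Th (.app f ts)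

/-- An anti-unification equation (AUE) `lhs ≜_lab rhs`. -/
structure AUE (F : Type) where
  lhs : Tm F
  lab : ℕ
  rhs : Tm F

/-- The labels of a set of AUEs. -/
def labels (W : Set (AUE F)) : Set ℕ := AUE.lab '' W

/-- A set of AUEs is valid if its labels are pairwise distinct. -/
def ValidAUEs (W : Set (AUE F)) : Prop :=
  ∀ a ∈ W, ∀ b ∈ W, a.lab = b.lab → a = b

/-- The wild card, as a term. -/
def starTm (Sg : AbsSig F) : Tm F := .app Sg.star []

/-- A wild AUE has the wild card on one of its sides. -/
def WildAUE (Sg : AbsSig F) (a : AUE F) : Prop :=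
  a.lhs = starTm Sg ∨ a.rhs = starTm Sg

/-- The heads of `s` and `t` form a related absorption pair. -/
def RelatedAbs {Sg : AbsSig F} (Th : AbsTh Sg) (s t : Tm F) : Prop :=
  ∃ f e : F, (f, e) ∈ Th.pairs ∧
    ((s.head = Sum.inr f ∧ t.head = Sum.inr e) ∨
     (s.head = Sum.inr e ∧ t.head = Sum.inr f))

/-- A solved AUE: distinct heads, no related absorption symbols, not wild. -/
def SolvedAUE {Sg : AbsSig F} (Th : AbsTh Sg) (a : AUE F) : Prop :=
  a.lhs.head ≠ a.rhs.head ∧ ¬ RelatedAbs Th a.lhs a.rhs ∧ ¬ WildAUE Sg a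

/-- A proper object term appearing in an AUE of a configuration: in
`Abs`-normal form, arity-respecting, ground, and wild-card free. -/
def GoodTm {Sg : AbsSig F} (Th : AbsTh Sg) (t : Tm F) : Prop :=
  NF Th t ∧ WFT Sg t ∧ (∀ x : ℕ, ¬ VarIn x t) ∧ ¬ SymOcc Sg.star t

/-- A configuration `⟨A; S; T; θ⟩`. -/
structure Config (F : Type) where
  A : Set (AUE F)
  S : Set (AUE F)
  T : Set (AUE F)
  θ : ℕ → Tm F

/-- The defining properties of configurations: `A`, `S`, `T` are (finite) valid
sets of unsolved, solved, resp. wild AUEs over object terms in `Abs`-normal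
form, `θ` is a substitution, (i) the labels of `A`, `S`, `T` and the domain of
`θ` are pairwise disjoint, and (ii) the variables occurring in the range of `θ`
are exactly the labels of `A`, `S` and `T`. -/
structure IsConfig {Sg : AbsSig F} (Th : AbsTh Sg) (C : Config F) : Prop where
  finA : C.A.Finite
  finS : C.S.Finite
  finT : C.T.Finite
  validA : ValidAUEs C.A
  validS : ValidAUEs C.S
  validT : ValidAUEs C.T
  goodA : ∀ a ∈ C.A, GoodTm Th a.lhs ∧ GoodTm Th a.rhs
  goodS : ∀ a ∈ C.S, GoodTm Th a.lhs ∧ GoodTm Th a.rhs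
  solvedS : ∀ a ∈ C.S, SolvedAUE Th a
  wildT : ∀ a ∈ C.T,
      (a.lhs = starTm Sg ∧ GoodTm Th a.rhs) ∨
      (a.rhs = starTm Sg ∧ GoodTm Th a.lhs)
  finDom : FinDom C.θ
  nfθ : ∀ x : ℕ, NF Th (C.θ x) ∧ WFT Sg (C.θ x)
  disjAS : Disjoint (labels C.A) (labels C.S)
  disjAT : Disjoint (labels C.A) (labels C.T)
  disjST : Disjoint (labels C.S) (labels C.T)
  disjAD : Disjoint (labels C.A) (Dom C.θ)
  disjSD : Disjoint (labels C.S) (Dom C.θ)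
  disjTD : Disjoint (labels C.T) (Dom C.θ)
  rvarEq : Rvar C.θ = labels C.A ∪ labels C.S ∪ labels C.T

/-- The substitution `{x ↦ t}`. -/
def single (x : ℕ) (t : Tm F) : ℕ → Tm F :=
  fun z => if z = x then t else .var z

/-- Composition `θ{x ↦ t}` of a substitution with a single binding. -/
def compOne (θ : ℕ → Tm F) (x : ℕ) (t : Tm F) : ℕ → Tm F :=
  fun z => (θ z).subst (single x t)

/-- A variable is fresh for a configuration. -/
def FreshIn (C : Config F) (y : ℕ) : Prop :=
  y ∉ labels C.A ∧ y ∉ labels C.S ∧ y ∉ labels C.T ∧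
  y ∉ Dom C.θ ∧ y ∉ Rvar C.θ

/-- Canonical choice of the next fresh variable for a configuration. -/
noncomputable def nextFresh (C : Config F) : ℕ :=
  sInf {k : ℕ | ∀ m : ℕ, k ≤ m → FreshIn C m}

/-- The set of AUEs `{s₁ ≜_{y₁} t₁, …, sₙ ≜_{yₙ} tₙ}`. -/
def zipAUEs (ss : List (Tm F)) (ys : List ℕ) (ts : List (Tm F)) : Set (AUE F) :=
  {a | ∃ (i : ℕ) (h1 : i < ss.length) (h2 : i < ys.length) (h3 : i < ts.length),
      a = ⟨ss.get ⟨i, h1⟩, ys.get ⟨i, h2⟩, ts.get ⟨i, h3⟩⟩}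

/-- The AUnif transformation rules: Decompose, Solve, the four Expansion rules
for left/right absorption, and Merge. -/
inductive Step {Sg : AbsSig F} (Th : AbsTh Sg) : Config F → Config F → Prop where
  | dec (f : F) (ss ts : List (Tm F)) (x : ℕ) (ys : List ℕ)
      (A S T : Set (AUE F)) (θ : ℕ → Tm F)
      (hlen : ss.length = ts.length)
      (hnotin : (⟨.app f ss, x, .app f ts⟩ : AUE F) ∉ A)
      (hys : ys = (List.range ss.length).map
          (fun i => nextFresh (⟨insert ⟨.app f ss, x, .app f ts⟩ A, S, T, θ⟩ : Config F) + i)) :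
      Step Th ⟨insert ⟨.app f ss, x, .app f ts⟩ A, S, T, θ⟩
        ⟨zipAUEs ss ys ts ∪ A, S, T, compOne θ x (.app f (ys.map Tm.var))⟩
  | sol (a : AUE F) (A S T : Set (AUE F)) (θ : ℕ → Tm F)
      (hhead : a.lhs.head ≠ a.rhs.head)
      (hrel : ¬ RelatedAbs Th a.lhs a.rhs)
      (hnotin : a ∉ A) :
      Step Th ⟨insert a A, S, T, θ⟩ ⟨A, insert a S, T, θ⟩
  | expLA1 (f e : F) (t1 t2 : Tm F) (x y1 y2 : ℕ)
      (A S T : Set (AUE F)) (θ : ℕ → Tm F)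
      (hp : (f, e) ∈ Th.pairs)
      (hnotin : (⟨.app e [], x, .app f [t1, t2]⟩ : AUE F) ∉ A)
      (hy1 : y1 = nextFresh (⟨insert ⟨.app e [], x, .app f [t1, t2]⟩ A, S, T, θ⟩ : Config F))
      (hy2 : y2 = y1 + 1) :
      Step Th ⟨insert ⟨.app e [], x, .app f [t1, t2]⟩ A, S, T, θ⟩
        ⟨insert ⟨.app e [], y1, t1⟩ A, S, insert ⟨starTm Sg, y2, t2⟩ T,
          compOne θ x (.app f [.var y1, .var y2])⟩
  | expLA2 (f e : F) (t1 t2 : Tm F) (x y1 y2 : ℕ)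
      (A S T : Set (AUE F)) (θ : ℕ → Tm F)
      (hp : (f, e) ∈ Th.pairs)
      (hnotin : (⟨.app e [], x, .app f [t1, t2]⟩ : AUE F) ∉ A)
      (hy1 : y1 = nextFresh (⟨insert ⟨.app e [], x, .app f [t1, t2]⟩ A, S, T, θ⟩ : Config F))
      (hy2 : y2 = y1 + 1) :
      Step Th ⟨insert ⟨.app e [], x, .app f [t1, t2]⟩ A, S, T, θ⟩
        ⟨insert ⟨.app e [], y2, t2⟩ A, S, insert ⟨starTm Sg, y1, t1⟩ T,
          compOne θ x (.app f [.var y1, .var y2])⟩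
  | expRA1 (f e : F) (s1 s2 : Tm F) (x y1 y2 : ℕ)
      (A S T : Set (AUE F)) (θ : ℕ → Tm F)
      (hp : (f, e) ∈ Th.pairs)
      (hnotin : (⟨.app f [s1, s2], x, .app e []⟩ : AUE F) ∉ A)
      (hy1 : y1 = nextFresh (⟨insert ⟨.app f [s1, s2], x, .app e []⟩ A, S, T, θ⟩ : Config F))
      (hy2 : y2 = y1 + 1) :
      Step Th ⟨insert ⟨.app f [s1, s2], x, .app e []⟩ A, S, T, θ⟩
        ⟨insert ⟨s1, y1, .app e []⟩ A, S, insert ⟨s2, y2, starTm Sg⟩ T,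
          compOne θ x (.app f [.var y1, .var y2])⟩
  | expRA2 (f e : F) (s1 s2 : Tm F) (x y1 y2 : ℕ)
      (A S T : Set (AUE F)) (θ : ℕ → Tm F)
      (hp : (f, e) ∈ Th.pairs)
      (hnotin : (⟨.app f [s1, s2], x, .app e []⟩ : AUE F) ∉ A)
      (hy1 : y1 = nextFresh (⟨insert ⟨.app f [s1, s2], x, .app e []⟩ A, S, T, θ⟩ : Config F))
      (hy2 : y2 = y1 + 1) :
      Step Th ⟨insert ⟨.app f [s1, s2], x, .app e []⟩ A, S, T, θ⟩
        ⟨insert ⟨s2, y2, .app e []⟩ A, S, insert ⟨s1, y1, starTm Sg⟩ T,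
          compOne θ x (.app f [.var y1, .var y2])⟩
  | mer (s t : Tm F) (x y : ℕ) (S T : Set (AUE F)) (θ : ℕ → Tm F)
      (hxy : x ≠ y)
      (hx : (⟨s, x, t⟩ : AUE F) ∉ S) (hy : (⟨s, y, t⟩ : AUE F) ∉ S) :
      Step Th ⟨∅, insert ⟨s, x, t⟩ (insert ⟨s, y, t⟩ S), T, θ⟩
        ⟨∅, insert ⟨s, y, t⟩ S, T, compOne θ x (.var y)⟩

/-- A final (normal) configuration: no rule applies. -/
def Final {Sg : AbsSig F} (Th : AbsTh Sg) (C : Config F) : Prop :=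
  ∀ C' : Config F, ¬ Step Th C C'

/-- `AUnif(C)`: the set of final configurations reachable from `C`. -/
def AUnifSet {Sg : AbsSig F} (Th : AbsTh Sg) (C : Config F) : Set (Config F) :=
  {C' | Relation.ReflTransGen (Step Th) C C' ∧ Final Th C'}

open Classical in
/-- The left substitution `σ_W` associated with a set of AUEs. -/
noncomputable def sigmaW (W : Set (AUE F)) : ℕ → Tm F :=
  fun y => if h : ∃ a, a ∈ W ∧ a.lab = y then h.choose.lhs else .var y

open Classical in
/-- The right substitution `ρ_W` associated with a set of AUEs. -/
noncomputable def rhoW (W : Set (AUE F)) : ℕ → Tm F :=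
  fun y => if h : ∃ a, a ∈ W ∧ a.lab = y then h.choose.rhs else .var y

/-- The abstraction set `↑(t, σ)`. -/
def absSet {Sg : AbsSig F} (Th : AbsTh Sg) (t : Tm F) (σ : ℕ → Tm F) : Set (Tm F) :=
  {r | AbsEq Th (r.subst σ) t ∧ NF Th r ∧ ∀ x : ℕ, VarIn x r → x ∈ Dom σ}

/-- `Ψ(T, S)`: the set of abstraction substitutions of a configuration with
abstraction `T` and store `S`. -/
def Psi {Sg : AbsSig F} (Th : AbsTh Sg) (T S : Set (AUE F)) : Set (ℕ → Tm F) :=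
  {τ | Dom τ = labels T ∧ ∀ a ∈ T,
      (a.lhs = starTm Sg → τ a.lab ∈ absSet Th a.rhs (rhoW S)) ∧
      (a.rhs = starTm Sg → τ a.lab ∈ absSet Th a.lhs (sigmaW S))}

/-- The initial configuration `⟨{s ≜_x t}; ∅; ∅; ι⟩` with starting label `xst`
and starting substitution `ι = {xst ↦ x}`. -/
def initConfig (s t : Tm F) (x xst : ℕ) : Config F :=
  ⟨{⟨s, x, t⟩}, ∅, ∅, single xst (.var x)⟩

/-- `AUnif(C₀)` is merged: identical solved AUEs in (possibly different) final
stores carry the same label, and equal labels carry identical AUEs. -/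
def Merged {Sg : AbsSig F} (Th : AbsTh Sg) (C0 : Config F) : Prop :=
  ∀ C1 ∈ AUnifSet Th C0, ∀ C2 ∈ AUnifSet Th C0, ∀ a ∈ C1.S, ∀ b ∈ C2.S,
    ((a.lhs = b.lhs ∧ a.rhs = b.rhs) ↔ a.lab = b.lab)

/-- `C_AUnif(s, t)`: all generalizations computed from final configurations of
the initial configuration for `s ≜_x t`, instantiated by abstraction
substitutions. -/
def CAUnif {Sg : AbsSig F} (Th : AbsTh Sg) (s t : Tm F) (x xst : ℕ) : Set (Tm F) :=
  {g | ∃ C' ∈ AUnifSet Th (initConfig s t x xst),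
      ∃ τ ∈ Psi Th C'.T C'.S, g = (C'.θ x).subst τ}

/-- Linear terms: no variable occurs more than once. -/
inductive Linear {F : Type} : Tm F → Prop where
  | var (x : ℕ) : Linear (.var x)
  | app (f : F) {ts : List (Tm F)} :
      (∀ t ∈ ts, Linear t) →
      List.Pairwise (fun s t => ∀ x : ℕ, VarIn x s → ¬ VarIn x t) ts →
      Linear (.app f ts)


section Termination

variable {F : Type}

/-- Size of a term. -/
def sz : Tm F → ℕ
  | .var _ => 1
  | .app _ ts => 1 + (ts.attach.map fun t => sz t.1).sum
decreasing_by
  have := List.sizeOf_lt_of_mem t.2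
  simp only [Tm.app.sizeOf_spec]
  omega

lemma sz_app (f : F) (ts : List (Tm F)) : sz (.app f ts) = 1 + (ts.map sz).sum := by
  rw [sz]
  congr 1
  exact congrArg List.sum (List.attach_map_val (l := ts) (f := sz))

lemma sz_pos (t : Tm F) : 1 ≤ sz t := by
  cases t with
  | var x => simp [sz]
  | app f ts => rw [sz_app]; omega

/-- Weight of an AUE. -/
def wAUE (a : AUE F) : ℕ := sz a.lhs + sz a.rhs

lemma two_le_wAUE (a : AUE F) : 2 ≤ wAUE a := by
  have h1 := sz_pos a.lhs; have h2 := sz_pos a.rhs; unfold wAUE; omega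

/-- Weight of a set of AUEs. -/
noncomputable def wS (s : Set (AUE F)) : ℕ := ∑ᶠ a ∈ s, wAUE a

lemma wS_eq {s : Set (AUE F)} (hs : s.Finite) : wS s = ∑ a ∈ hs.toFinset, wAUE a := by
  rw [wS, ← finsum_mem_coe_finset, hs.coe_toFinset]

lemma wS_empty : wS (∅ : Set (AUE F)) = 0 := finsum_mem_empty

lemma wS_insert_eq {s : Set (AUE F)} {a : AUE F} (ha : a ∉ s) (hs : s.Finite) :
    wS (insert a s) = wAUE a + wS s := finsum_mem_insert _ ha hs

lemma wS_mono {s t : Set (AUE F)} (h : s ⊆ t) (ht : t.Finite) : wS s ≤ wS t := by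
  rw [wS_eq (ht.subset h), wS_eq ht]
  exact Finset.sum_le_sum_of_subset (Set.Finite.toFinset_subset_toFinset.2 h)

lemma wS_insert_le {s : Set (AUE F)} (a : AUE F) (hs : s.Finite) :
    wS (insert a s) ≤ wAUE a + wS s := by
  by_cases ha : a ∈ s
  · rw [Set.insert_eq_self.2 ha]; omega
  · rw [wS_insert_eq ha hs]

lemma wS_union_le {s t : Set (AUE F)} (hs : s.Finite) (ht : t.Finite) :
    wS (s ∪ t) ≤ wS s + wS t := by
  classical
  rw [wS_eq (hs.union ht), wS_eq hs, wS_eq ht, Set.Finite.toFinset_union hs ht]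
  exact Nat.le.intro Finset.sum_union_inter

/-- The measure of a configuration. -/
noncomputable def meas (C : Config F) : ℕ := wS C.A + C.S.ncard

end Termination
section ZipLemmas

variable {F : Type}

/-- Index-function presentation of `zipAUEs`. -/
def zfun (ss : List (Tm F)) (ys : List ℕ) (ts : List (Tm F)) (i : ℕ) : AUE F :=
  ⟨ss.getD i (.var 0), ys.getD i 0, ts.getD i (.var 0)⟩

lemma zipAUEs_subset (ss ts : List (Tm F)) (ys : List ℕ) :
    zipAUEs ss ys ts ⊆ zfun ss ys ts '' (Set.Iio ss.length) := by
  rintro a ⟨i, h1, h2, h3, rfl⟩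
  refine ⟨i, h1, ?_⟩
  simp [zfun, List.getD_eq_getElem?_getD, List.getElem?_eq_getElem, h1, h2, h3,
    List.get_eq_getElem]

lemma zipAUEs_finite (ss ts : List (Tm F)) (ys : List ℕ) :
    (zipAUEs ss ys ts).Finite :=
  (((Set.finite_Iio _).image _).subset (zipAUEs_subset ss ts ys))

lemma sum_getD {α : Type*} (f : α → ℕ) (d : α) :
    ∀ l : List α, ∑ i ∈ Finset.range l.length, f (l.getD i d) = (l.map f).sum
  | [] => by simp
  | a :: l => by
      rw [List.length_cons, Finset.sum_range_succ']
      simp only [List.getD_cons_succ, List.getD_cons_zero, List.map_cons, List.sum_cons]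
      rw [sum_getD f d l]; omega

lemma wS_zip_le (ss ts : List (Tm F)) (c : ℕ) (hlen : ss.length = ts.length) :
    wS (zipAUEs ss ((List.range ss.length).map (fun i => c + i)) ts)
      ≤ (ss.map sz).sum + (ts.map sz).sum := by
  classical
  set ys : List ℕ := (List.range ss.length).map (fun i => c + i) with hys
  have hy : ∀ i < ss.length, ys.getD i 0 = c + i := by
    intro i hi
    simp [hys, List.getD_eq_getElem?_getD, List.getElem?_map, List.getElem?_range, hi]
  have himg : (zfun ss ys ts '' (Set.Iio ss.length)).Finite :=
    (Set.finite_Iio _).image _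
  have h1 : wS (zipAUEs ss ys ts) ≤ wS (zfun ss ys ts '' (Set.Iio ss.length)) :=
    wS_mono (zipAUEs_subset ss ts ys) himg
  have h2 : wS (zfun ss ys ts '' (Set.Iio ss.length))
      = ∑ i ∈ Finset.range ss.length, wAUE (zfun ss ys ts i) := by
    rw [← Finset.coe_range, ← Finset.coe_image, wS, finsum_mem_coe_finset]
    refine Finset.sum_image ?_
    intro i hi j hj hij
    have := congrArg AUE.lab hij
    simp only [zfun] at this
    rw [hy i (Finset.mem_range.1 hi), hy j (Finset.mem_range.1 hj)] at this
    omega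
  have h3 : ∑ i ∈ Finset.range ss.length, wAUE (zfun ss ys ts i)
      = (ss.map sz).sum + (ts.map sz).sum := by
    simp only [zfun, wAUE, Finset.sum_add_distrib]
    rw [sum_getD sz (Tm.var 0) ss, hlen, sum_getD sz (Tm.var 0) ts]
  omega

end ZipLemmas
section StepMeas

variable {F : Type} {Sg : AbsSig F} {Th : AbsTh Sg}

lemma step_meas {C C' : Config F} (h : Step Th C C')
    (hA : C.A.Finite) (hS : C.S.Finite) :
    meas C' < meas C ∧ C'.A.Finite ∧ C'.S.Finite := by
  cases h with
  | dec f ss ts x ys A S T θ hlen hnotin hys =>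
      have hAfin : A.Finite := hA.subset (Set.subset_insert _ _)
      have hzfin := zipAUEs_finite ss ts ys
      refine ⟨?_, hzfin.union hAfin, hS⟩
      have e1 : wS (insert (⟨.app f ss, x, .app f ts⟩ : AUE F) A)
          = wAUE (⟨.app f ss, x, .app f ts⟩ : AUE F) + wS A := wS_insert_eq hnotin hAfin
      have e2 : wS (zipAUEs ss ys ts ∪ A) ≤ wS (zipAUEs ss ys ts) + wS A :=
        wS_union_le hzfin hAfin
      have e3 : wS (zipAUEs ss ys ts) ≤ (ss.map sz).sum + (ts.map sz).sum := by
        rw [hys]; exact wS_zip_le ss ts _ hlen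
      have e4 : wAUE (⟨.app f ss, x, .app f ts⟩ : AUE F)
          = (1 + (ss.map sz).sum) + (1 + (ts.map sz).sum) := by
        simp only [wAUE, sz_app]
      simp only [meas]
      omega
  | sol a A S T θ hhead hrel hnotin =>
      have hAfin : A.Finite := hA.subset (Set.subset_insert _ _)
      refine ⟨?_, hAfin, hS.insert a⟩
      have e1 : wS (insert a A) = wAUE a + wS A := wS_insert_eq hnotin hAfin
      have e2 : (insert a S).ncard ≤ S.ncard + 1 := Set.ncard_insert_le a S
      have e3 := two_le_wAUE a
      simp only [meas]
      omega
  | expLA1 f e t1 t2 x y1 y2 A S T θ hp hnotin hy1 hy2 =>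
      have hAfin : A.Finite := hA.subset (Set.subset_insert _ _)
      refine ⟨?_, hAfin.insert _, hS⟩
      have e1 : wS (insert (⟨.app e [], x, .app f [t1, t2]⟩ : AUE F) A)
          = wAUE (⟨.app e [], x, .app f [t1, t2]⟩ : AUE F) + wS A := wS_insert_eq hnotin hAfin
      have e2 : wS (insert (⟨.app e [], y1, t1⟩ : AUE F) A)
          ≤ wAUE (⟨.app e [], y1, t1⟩ : AUE F) + wS A := wS_insert_le _ hAfin
      have e3 : wAUE (⟨.app e [], x, .app f [t1, t2]⟩ : AUE F) = 2 + sz t1 + sz t2 := by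
        simp only [wAUE, sz_app, List.map_cons, List.map_nil, List.sum_cons, List.sum_nil]
        omega
      have e4 : wAUE (⟨.app e [], y1, t1⟩ : AUE F) = 1 + sz t1 := by
        simp only [wAUE, sz_app, List.map_nil, List.sum_nil]
        omega
      have e5 := sz_pos t2
      simp only [meas]
      omega
  | expLA2 f e t1 t2 x y1 y2 A S T θ hp hnotin hy1 hy2 =>
      have hAfin : A.Finite := hA.subset (Set.subset_insert _ _)
      refine ⟨?_, hAfin.insert _, hS⟩
      have e1 : wS (insert (⟨.app e [], x, .app f [t1, t2]⟩ : AUE F) A)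
          = wAUE (⟨.app e [], x, .app f [t1, t2]⟩ : AUE F) + wS A := wS_insert_eq hnotin hAfin
      have e2 : wS (insert (⟨.app e [], y2, t2⟩ : AUE F) A)
          ≤ wAUE (⟨.app e [], y2, t2⟩ : AUE F) + wS A := wS_insert_le _ hAfin
      have e3 : wAUE (⟨.app e [], x, .app f [t1, t2]⟩ : AUE F) = 2 + sz t1 + sz t2 := by
        simp only [wAUE, sz_app, List.map_cons, List.map_nil, List.sum_cons, List.sum_nil]
        omega
      have e4 : wAUE (⟨.app e [], y2, t2⟩ : AUE F) = 1 + sz t2 := by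
        simp only [wAUE, sz_app, List.map_nil, List.sum_nil]
        omega
      have e5 := sz_pos t1
      simp only [meas]
      omega
  | expRA1 f e s1 s2 x y1 y2 A S T θ hp hnotin hy1 hy2 =>
      have hAfin : A.Finite := hA.subset (Set.subset_insert _ _)
      refine ⟨?_, hAfin.insert _, hS⟩
      have e1 : wS (insert (⟨.app f [s1, s2], x, .app e []⟩ : AUE F) A)
          = wAUE (⟨.app f [s1, s2], x, .app e []⟩ : AUE F) + wS A := wS_insert_eq hnotin hAfin
      have e2 : wS (insert (⟨s1, y1, .app e []⟩ : AUE F) A)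
          ≤ wAUE (⟨s1, y1, .app e []⟩ : AUE F) + wS A := wS_insert_le _ hAfin
      have e3 : wAUE (⟨.app f [s1, s2], x, .app e []⟩ : AUE F) = 2 + sz s1 + sz s2 := by
        simp only [wAUE, sz_app, List.map_cons, List.map_nil, List.sum_cons, List.sum_nil]
        omega
      have e4 : wAUE (⟨s1, y1, .app e []⟩ : AUE F) = sz s1 + 1 := by
        simp only [wAUE, sz_app, List.map_nil, List.sum_nil]; omega
      have e5 := sz_pos s2
      simp only [meas]
      omega
  | expRA2 f e s1 s2 x y1 y2 A S T θ hp hnotin hy1 hy2 =>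
      have hAfin : A.Finite := hA.subset (Set.subset_insert _ _)
      refine ⟨?_, hAfin.insert _, hS⟩
      have e1 : wS (insert (⟨.app f [s1, s2], x, .app e []⟩ : AUE F) A)
          = wAUE (⟨.app f [s1, s2], x, .app e []⟩ : AUE F) + wS A := wS_insert_eq hnotin hAfin
      have e2 : wS (insert (⟨s2, y2, .app e []⟩ : AUE F) A)
          ≤ wAUE (⟨s2, y2, .app e []⟩ : AUE F) + wS A := wS_insert_le _ hAfin
      have e3 : wAUE (⟨.app f [s1, s2], x, .app e []⟩ : AUE F) = 2 + sz s1 + sz s2 := by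
        simp only [wAUE, sz_app, List.map_cons, List.map_nil, List.sum_cons, List.sum_nil]
        omega
      have e4 : wAUE (⟨s2, y2, .app e []⟩ : AUE F) = sz s2 + 1 := by
        simp only [wAUE, sz_app, List.map_nil, List.sum_nil]; omega
      have e5 := sz_pos s1
      simp only [meas]
      omega
  | mer s t x y S T θ hxy hx hy =>
      have hab : (⟨s, x, t⟩ : AUE F) ≠ ⟨s, y, t⟩ := fun h => hxy (congrArg AUE.lab h)
      have hbS : (insert (⟨s, y, t⟩ : AUE F) S).Finite := hS.subset (Set.subset_insert _ _)
      refine ⟨?_, Set.finite_empty, hbS⟩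
      have hnot : (⟨s, x, t⟩ : AUE F) ∉ insert (⟨s, y, t⟩ : AUE F) S := by
        simp only [Set.mem_insert_iff]
        rintro (h | h)
        · exact hab h
        · exact hx h
      have e1 : (insert (⟨s, x, t⟩ : AUE F) (insert ⟨s, y, t⟩ S)).ncard
          = (insert (⟨s, y, t⟩ : AUE F) S).ncard + 1 :=
        Set.ncard_insert_of_notMem hnot hbS
      simp only [meas]
      omega

end StepMeas
section Succ

variable {F : Type} {Sg : AbsSig F} {Th : AbsTh Sg}

/-- Candidate successor for the Decompose rule. -/
noncomputable def decSucc (C : Config F) (a : AUE F) : Config F :=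
  match a.lhs, a.rhs with
  | .app f ss, .app _ ts =>
      ⟨zipAUEs ss ((List.range ss.length).map fun i => nextFresh C + i) ts ∪ (C.A \ {a}),
        C.S, C.T,
        compOne C.θ a.lab
          (.app f (((List.range ss.length).map fun i => nextFresh C + i).map Tm.var))⟩
  | _, _ => C

/-- Candidate successor for the Solve rule. -/
def solSucc (C : Config F) (a : AUE F) : Config F :=
  ⟨C.A \ {a}, insert a C.S, C.T, C.θ⟩

/-- Candidate successor for ExpLA1. -/
noncomputable def expLA1Succ (Sg : AbsSig F) (C : Config F) (a : AUE F) : Config F :=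
  match a.rhs with
  | .app f [t1, t2] =>
      ⟨insert ⟨a.lhs, nextFresh C, t1⟩ (C.A \ {a}), C.S,
        insert ⟨starTm Sg, nextFresh C + 1, t2⟩ C.T,
        compOne C.θ a.lab (.app f [.var (nextFresh C), .var (nextFresh C + 1)])⟩
  | _ => C

/-- Candidate successor for ExpLA2. -/
noncomputable def expLA2Succ (Sg : AbsSig F) (C : Config F) (a : AUE F) : Config F :=
  match a.rhs with
  | .app f [t1, t2] =>
      ⟨insert ⟨a.lhs, nextFresh C + 1, t2⟩ (C.A \ {a}), C.S,
        insert ⟨starTm Sg, nextFresh C, t1⟩ C.T,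
        compOne C.θ a.lab (.app f [.var (nextFresh C), .var (nextFresh C + 1)])⟩
  | _ => C

/-- Candidate successor for ExpRA1. -/
noncomputable def expRA1Succ (Sg : AbsSig F) (C : Config F) (a : AUE F) : Config F :=
  match a.lhs with
  | .app f [s1, s2] =>
      ⟨insert ⟨s1, nextFresh C, a.rhs⟩ (C.A \ {a}), C.S,
        insert ⟨s2, nextFresh C + 1, starTm Sg⟩ C.T,
        compOne C.θ a.lab (.app f [.var (nextFresh C), .var (nextFresh C + 1)])⟩
  | _ => C

/-- Candidate successor for ExpRA2. -/
noncomputable def expRA2Succ (Sg : AbsSig F) (C : Config F) (a : AUE F) : Config F :=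
  match a.lhs with
  | .app f [s1, s2] =>
      ⟨insert ⟨s2, nextFresh C + 1, a.rhs⟩ (C.A \ {a}), C.S,
        insert ⟨s1, nextFresh C, starTm Sg⟩ C.T,
        compOne C.θ a.lab (.app f [.var (nextFresh C), .var (nextFresh C + 1)])⟩
  | _ => C

/-- Candidate successor for Merge. -/
def merSucc (C : Config F) (p : AUE F × AUE F) : Config F :=
  ⟨∅, C.S \ {p.1}, C.T, compOne C.θ p.1.lab (.var p.2.lab)⟩

lemma step_subset (C : Config F) :
    {C' | Step Th C C'} ⊆
      decSucc C '' C.A ∪ solSucc C '' C.A ∪ expLA1Succ Sg C '' C.A ∪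
      expLA2Succ Sg C '' C.A ∪ expRA1Succ Sg C '' C.A ∪ expRA2Succ Sg C '' C.A ∪
      merSucc C '' (C.S ×ˢ C.S) := by
  intro C' hC'
  cases hC' with
  | dec f ss ts x ys A S T θ hlen hnotin hys =>
      refine Or.inl (Or.inl (Or.inl (Or.inl (Or.inl (Or.inl
        ⟨⟨.app f ss, x, .app f ts⟩, Set.mem_insert _ _, ?_⟩)))))
      simp only [decSucc]
      rw [Set.insert_diff_self_of_notMem hnotin]
      rw [hys]
  | sol a A S T θ hhead hrel hnotin =>
      refine Or.inl (Or.inl (Or.inl (Or.inl (Or.inl (Or.inr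
        ⟨a, Set.mem_insert _ _, ?_⟩)))))
      simp only [solSucc]
      rw [Set.insert_diff_self_of_notMem hnotin]
  | expLA1 f e t1 t2 x y1 y2 A S T θ hp hnotin hy1 hy2 =>
      refine Or.inl (Or.inl (Or.inl (Or.inl (Or.inr
        ⟨⟨.app e [], x, .app f [t1, t2]⟩, Set.mem_insert _ _, ?_⟩))))
      simp only [expLA1Succ]
      rw [Set.insert_diff_self_of_notMem hnotin, hy2, hy1]
  | expLA2 f e t1 t2 x y1 y2 A S T θ hp hnotin hy1 hy2 =>
      refine Or.inl (Or.inl (Or.inl (Or.inr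
        ⟨⟨.app e [], x, .app f [t1, t2]⟩, Set.mem_insert _ _, ?_⟩)))
      simp only [expLA2Succ]
      rw [Set.insert_diff_self_of_notMem hnotin, hy2, hy1]
  | expRA1 f e s1 s2 x y1 y2 A S T θ hp hnotin hy1 hy2 =>
      refine Or.inl (Or.inl (Or.inr
        ⟨⟨.app f [s1, s2], x, .app e []⟩, Set.mem_insert _ _, ?_⟩))
      simp only [expRA1Succ]
      rw [Set.insert_diff_self_of_notMem hnotin, hy2, hy1]
  | expRA2 f e s1 s2 x y1 y2 A S T θ hp hnotin hy1 hy2 =>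
      refine Or.inl (Or.inr
        ⟨⟨.app f [s1, s2], x, .app e []⟩, Set.mem_insert _ _, ?_⟩)
      simp only [expRA2Succ]
      rw [Set.insert_diff_self_of_notMem hnotin, hy2, hy1]
  | mer s t x y S T θ hxy hx hy =>
      have hab : (⟨s, x, t⟩ : AUE F) ≠ ⟨s, y, t⟩ := fun h => hxy (congrArg AUE.lab h)
      refine Or.inr ⟨(⟨s, x, t⟩, ⟨s, y, t⟩), ⟨Set.mem_insert _ _,
        Set.mem_insert_of_mem _ (Set.mem_insert _ _)⟩, ?_⟩
      simp only [merSucc]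
      have : insert (⟨s, x, t⟩ : AUE F) (insert ⟨s, y, t⟩ S) \ {⟨s, x, t⟩}
          = insert (⟨s, y, t⟩ : AUE F) S := by
        rw [Set.insert_diff_self_of_notMem]
        simp only [Set.mem_insert_iff]
        rintro (h | h)
        · exact hab h
        · exact hx h
      rw [this]

lemma step_finite (C : Config F) (hA : C.A.Finite) (hS : C.S.Finite) :
    {C' | Step Th C C'}.Finite := by
  have h1 := hA.image (decSucc C)
  have h2 := hA.image (solSucc C)
  have h3 := hA.image (expLA1Succ Sg C)
  have h4 := hA.image (expLA2Succ Sg C)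
  have h5 := hA.image (expRA1Succ Sg C)
  have h6 := hA.image (expRA2Succ Sg C)
  have h7 := (hS.prod hS).image (merSucc C)
  exact Set.Finite.subset
    ((((((h1.union h2).union h3).union h4).union h5).union h6).union h7)
    (step_subset C)

end Succ
section Reach

variable {F : Type} {Sg : AbsSig F} {Th : AbsTh Sg}

lemma reach_finite : ∀ n : ℕ, ∀ C : Config F, C.A.Finite → C.S.Finite → meas C ≤ n →
    {C' | Relation.ReflTransGen (Step Th) C C'}.Finite := by
  intro n
  induction n using Nat.strong_induction_on with
  | _ n ih =>
    intro C hA hS hm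
    have hsub : {C' | Relation.ReflTransGen (Step Th) C C'} ⊆
        insert C (⋃ D ∈ {D | Step Th C D}, {C' | Relation.ReflTransGen (Step Th) D C'}) := by
      intro C' hC'
      rcases Relation.ReflTransGen.cases_head hC' with h | ⟨D, hCD, hDC'⟩
      · cases h; exact Set.mem_insert _ _
      · exact Set.mem_insert_of_mem _ (Set.mem_biUnion hCD hDC')
    refine Set.Finite.subset (Set.Finite.insert C ?_) hsub
    refine Set.Finite.biUnion (step_finite C hA hS) ?_
    intro D hD
    obtain ⟨hlt, hDA, hDS⟩ := step_meas hD hA hS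
    exact ih (meas D) (lt_of_lt_of_le hlt hm) D hDA hDS le_rfl

end Reach
/-- Termination, Theorem 1: AUnif admits no infinite derivation
starting from a configuration, and for every configuration `C` the set
`AUnif(C)` of final configurations reachable from `C` is finite. -/
theorem aunif_termination {F : Type} {Sg : AbsSig F} (Th : AbsTh Sg) :
    (∀ seq : ℕ → Config F, IsConfig Th (seq 0) →
        ¬ (∀ n : ℕ, Step Th (seq n) (seq (n + 1)))) ∧
    (∀ C : Config F, IsConfig Th C → (AUnifSet Th C).Finite) := by
  constructor
  · intro seq h0 hstep
    have good : ∀ n, (seq n).A.Finite ∧ (seq n).S.Finite := by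
      intro n
      induction n with
      | zero => exact ⟨h0.finA, h0.finS⟩
      | succ n ih =>
          obtain ⟨_, h1, h2⟩ := step_meas (hstep n) ih.1 ih.2
          exact ⟨h1, h2⟩
    have hdec : ∀ n, meas (seq (n + 1)) < meas (seq n) := fun n =>
      (step_meas (hstep n) (good n).1 (good n).2).1
    have key : ∀ n, meas (seq n) + n ≤ meas (seq 0) := by
      intro n
      induction n with
      | zero => omega
      | succ n ih => have := hdec n; omega
    have := key (meas (seq 0) + 1)
    omega
  · intro C hC
    exact (reach_finite (meas C) C hC.finA hC.finS le_rfl).subset fun C' h => h.1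

end AbsAU
end

section
/- Soundness with abstraction substitutions: let ⟨A0;S0;T0;θ0⟩ ⟹* ⟨∅;S_n;T_n;θ_n⟩ be an AUnif derivation to a final configuration and let s ≜_x t ∈ A0 ∪ S0. Then for every abstraction substitution τ ∈ Ψ(T_n,S_n), the term xθ_nτ is an Abs-generalization of s and t. -/
/- Common development: first-order terms, absorption theories, anti-unification
   equations, configurations and the AUnif transformation rules. -/

namespace AbsAU

variable {F : Type}

section Aux
variable {F : Type}

@[simp] theorem subst_var (σ : ℕ → Tm F) (x : ℕ) : (Tm.var x).subst σ = σ x := by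
  rw [Tm.subst]

theorem subst_app (σ : ℕ → Tm F) (f : F) (ts : List (Tm F)) :
    (Tm.app f ts).subst σ = .app f (ts.map (Tm.subst σ)) := by
  rw [Tm.subst]
  congr 1
  exact List.attach_map_val (l := ts) (f := Tm.subst σ)

theorem subst_subst (σ ρ : ℕ → Tm F) : ∀ t : Tm F,
    (t.subst σ).subst ρ = t.subst (fun v => (σ v).subst ρ)
  | .var x => by simp
  | .app f ts => by
      rw [subst_app, subst_app, subst_app, List.map_map]
      exact congrArg _ (List.map_congr_left fun t ht => subst_subst σ ρ t)
decreasing_by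
  have := List.sizeOf_lt_of_mem ht
  simp only [Tm.app.sizeOf_spec]
  omega

theorem vars_finite : ∀ t : Tm F, {y : ℕ | VarIn y t}.Finite
  | .var x => (Set.finite_singleton x).subset (by rintro y hy; cases hy; simp)
  | .app f ts => by
      refine (Set.Finite.biUnion ts.finite_toSet
        (fun t ht => vars_finite t)).subset ?_
      rintro y hy
      cases hy with
      | app f hm hv => exact Set.mem_biUnion hm hv
decreasing_by
  have := List.sizeOf_lt_of_mem ht
  simp only [Tm.app.sizeOf_spec]
  omega

end Aux
section Main
variable {F : Type} {Sg : AbsSig F}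

/-- Invariant preserved by the AUnif rules. -/
structure Inv (C : Config F) : Prop where
  finA : C.A.Finite
  finS : C.S.Finite
  finT : C.T.Finite
  validA : ValidAUEs C.A
  validS : ValidAUEs C.S
  disjAS : Disjoint (labels C.A) (labels C.S)
  disjAT : Disjoint (labels C.A) (labels C.T)
  disjST : Disjoint (labels C.S) (labels C.T)
  finD : FinDom C.θ

theorem valid_mono {W V : Set (AUE F)} (h : W ⊆ V) (hV : ValidAUEs V) :
    ValidAUEs W := fun a ha b hb hab => hV a (h ha) b (h hb) hab

theorem lab_notin {a : AUE F} {W : Set (AUE F)} (hV : ValidAUEs (insert a W))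
    (hn : a ∉ W) : a.lab ∉ labels W := by
  rintro ⟨b, hb, hbl⟩
  exact hn ((hV b (Set.mem_insert_of_mem _ hb) a (Set.mem_insert _ _) hbl) ▸ hb)

theorem valid_insert {a : AUE F} {W : Set (AUE F)} (hl : a.lab ∉ labels W)
    (hV : ValidAUEs W) : ValidAUEs (insert a W) := by
  intro b hb c hc hbc
  rcases hb with rfl | hb <;> rcases hc with rfl | hc
  · rfl
  · exact absurd ⟨c, hc, hbc.symm⟩ hl
  · exact absurd ⟨b, hb, hbc⟩ hl
  · exact hV b hb c hc hbc

theorem rvar_finite {θ : ℕ → Tm F} (h : FinDom θ) : (Rvar θ).Finite := by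
  refine (Set.Finite.biUnion h (fun x _ => vars_finite (θ x))).subset ?_
  rintro y ⟨x, hx, hv⟩
  exact Set.mem_biUnion hx hv

theorem findom_compOne {θ : ℕ → Tm F} (h : FinDom θ) (x : ℕ) (t : Tm F) :
    FinDom (compOne θ x t) := by
  refine (h.union (Set.finite_singleton x)).subset ?_
  intro z hz
  by_contra hn
  simp only [Set.mem_union, Set.mem_singleton_iff, not_or] at hn
  apply hz
  have hθ : θ z = .var z := by
    by_contra h'; exact hn.1 h'
  show (θ z).subst (single x t) = .var z
  rw [hθ, subst_var, single, if_neg hn.2]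

theorem nextFresh_spec {C : Config F} (h : Inv C) :
    ∀ m, nextFresh C ≤ m → FreshIn C m := by
  have hU : (labels C.A ∪ labels C.S ∪ labels C.T ∪ Dom C.θ ∪ Rvar C.θ).Finite :=
    ((((h.finA.image _).union (h.finS.image _)).union (h.finT.image _)).union h.finD).union
      (rvar_finite h.finD)
  obtain ⟨b, hb⟩ := hU.bddAbove
  have hK : (b + 1) ∈ {k : ℕ | ∀ m, k ≤ m → FreshIn C m} := by
    intro m hm
    have hnot : m ∉ labels C.A ∪ labels C.S ∪ labels C.T ∪ Dom C.θ ∪ Rvar C.θ := by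
      intro hmem
      have := hb hmem
      omega
    simp only [Set.mem_union, not_or] at hnot
    exact ⟨hnot.1.1.1.1, hnot.1.1.1.2, hnot.1.1.2, hnot.1.2, hnot.2⟩
  have hmem := Nat.sInf_mem (⟨_, hK⟩ : {k : ℕ | ∀ m, k ≤ m → FreshIn C m}.Nonempty)
  exact hmem

/-- Selected side of an AUE. -/
def sd (b : Bool) (a : AUE F) : Tm F := if b then a.lhs else a.rhs

@[simp] theorem sd_true (a : AUE F) : sd true a = a.lhs := rfl
@[simp] theorem sd_false (a : AUE F) : sd false a = a.rhs := rfl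

/-- The condition on an instantiating substitution relative to a configuration. -/
def Cond (Th : AbsTh Sg) (b : Bool) (C : Config F) (φ : ℕ → Tm F) : Prop :=
  (∀ a ∈ C.A ∪ C.S, AbsEq Th (φ a.lab) (sd b a)) ∧
  (∀ a ∈ C.T, sd (!b) a = starTm Sg → AbsEq Th (φ a.lab) (sd b a))

end Main
section Zip
variable {F : Type}

theorem zip_finite (ss : List (Tm F)) (ys : List ℕ) (ts : List (Tm F)) :
    (zipAUEs ss ys ts).Finite := by
  refine (List.finite_toSet ((ss.zip (ys.zip ts)).map
    (fun p => (⟨p.1, p.2.1, p.2.2⟩ : AUE F)))).subset ?_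
  rintro a ⟨i, h1, h2, h3, rfl⟩
  have hi : i < (ss.zip (ys.zip ts)).length := by
    simp only [List.length_zip]
    omega
  refine List.mem_map.2 ⟨(ss.zip (ys.zip ts))[i], List.getElem_mem hi, ?_⟩
  simp [List.getElem_zip, List.get_eq_getElem]

theorem zip_labels {ss : List (Tm F)} {ys : List ℕ} {ts : List (Tm F)} {m : ℕ}
    (h : m ∈ labels (zipAUEs ss ys ts)) :
    ∃ (i : ℕ) (h2 : i < ys.length), i < ss.length ∧ m = ys.get ⟨i, h2⟩ := by
  obtain ⟨a, ⟨i, h1, h2, h3, rfl⟩, rfl⟩ := h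
  exact ⟨i, h2, h1, rfl⟩

end Zip
section InvStep
variable {F : Type} {Sg : AbsSig F}

theorem mem_labels {a : AUE F} {W : Set (AUE F)} (h : a ∈ W) : a.lab ∈ labels W :=
  ⟨a, h, rfl⟩

theorem labels_insert (a : AUE F) (W : Set (AUE F)) :
    labels (insert a W) = insert a.lab (labels W) := Set.image_insert_eq

theorem labels_mono {W V : Set (AUE F)} (h : W ⊆ V) : labels W ⊆ labels V :=
  Set.image_mono h

/-- Invariant preservation for the four expansion rules. -/
theorem inv_exp {A S T : Set (AUE F)} {θ : ℕ → Tm F} {a0 a1 a2 : AUE F} {x : ℕ}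
    {t : Tm F} (h : Inv (⟨insert a0 A, S, T, θ⟩ : Config F))
    (ha1 : FreshIn (⟨insert a0 A, S, T, θ⟩ : Config F) a1.lab)
    (ha2 : FreshIn (⟨insert a0 A, S, T, θ⟩ : Config F) a2.lab)
    (hne : a1.lab ≠ a2.lab) :
    Inv (⟨insert a1 A, S, insert a2 T, compOne θ x t⟩ : Config F) := by
  have hAsub : labels A ⊆ labels (insert a0 A) := labels_mono (Set.subset_insert _ _)
  refine ⟨(h.finA.subset (Set.subset_insert _ _)).insert _, h.finS, h.finT.insert _,
    valid_insert (fun hm => ha1.1 (hAsub hm)) (valid_mono (Set.subset_insert _ _) h.validA),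
    h.validS, ?_, ?_, ?_, findom_compOne h.finD _ _⟩
  · rw [show (⟨insert a1 A, S, insert a2 T, compOne θ x t⟩ : Config F).A = insert a1 A from rfl]
    rw [labels_insert]
    refine Set.disjoint_left.2 ?_
    rintro m (rfl | hm)
    · exact ha1.2.1
    · exact Set.disjoint_left.1 h.disjAS (hAsub hm)
  · rw [show (⟨insert a1 A, S, insert a2 T, compOne θ x t⟩ : Config F).A = insert a1 A from rfl]
    rw [labels_insert, labels_insert]
    refine Set.disjoint_left.2 ?_
    rintro m (rfl | hm)
    · rintro (hc | hc)
      · exact hne hc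
      · exact ha1.2.2.1 hc
    · rintro (rfl | hc)
      · exact ha2.1 (hAsub hm)
      · exact Set.disjoint_left.1 h.disjAT (hAsub hm) hc
  · rw [show (⟨insert a1 A, S, insert a2 T, compOne θ x t⟩ : Config F).T = insert a2 T from rfl]
    rw [labels_insert]
    refine Set.disjoint_left.2 ?_
    intro m hm
    rintro (rfl | hc)
    · exact ha2.2.1 hm
    · exact Set.disjoint_left.1 h.disjST hm hc

theorem inv_step {Th : AbsTh Sg} {C C' : Config F} (h : Inv C) (hs : Step Th C C') :
    Inv C' := by
  cases hs with
  | dec f ss ts x ys A S T θ hlen hnotin hys =>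
      have hfr := nextFresh_spec h
      have hzfr : ∀ m ∈ labels (zipAUEs ss ys ts),
          FreshIn (⟨insert ⟨.app f ss, x, .app f ts⟩ A, S, T, θ⟩ : Config F) m := by
        intro m hm
        obtain ⟨i, h2, h1, rfl⟩ := zip_labels hm
        have : ys.get ⟨i, h2⟩ =
            nextFresh (⟨insert ⟨.app f ss, x, .app f ts⟩ A, S, T, θ⟩ : Config F) + i := by
          subst hys; simp
        rw [this]
        exact hfr _ (Nat.le_add_right _ _)
      have hAsub : labels A ⊆ labels (insert (⟨.app f ss, x, .app f ts⟩ : AUE F) A) :=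
        labels_mono (Set.subset_insert _ _)
      have hlabU : labels (zipAUEs ss ys ts ∪ A) = labels (zipAUEs ss ys ts) ∪ labels A :=
        Set.image_union _ _ _
      refine ⟨(zip_finite _ _ _).union (h.finA.subset (Set.subset_insert _ _)), h.finS,
        h.finT, ?_, h.validS, ?_, ?_, h.disjST, findom_compOne h.finD _ _⟩
      · rintro a (ha | ha) b (hb | hb) hab
        · obtain ⟨i, hi1, hi2, hi3, rfl⟩ := ha
          obtain ⟨j, hj1, hj2, hj3, rfl⟩ := hb
          have hij : i = j := by
            have hlab : ys.get ⟨i, hi2⟩ = ys.get ⟨j, hj2⟩ := hab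
            subst hys
            simpa using hlab
          subst hij
          rfl
        · exact absurd (hab ▸ mem_labels hb) (fun hc => (hzfr _ (mem_labels ha)).1 (hAsub hc))
        · exact absurd (hab ▸ mem_labels ha) (fun hc => (hzfr _ (mem_labels hb)).1 (hAsub hc))
        · exact h.validA a (Set.mem_insert_of_mem _ ha) b (Set.mem_insert_of_mem _ hb) hab
      · rw [show (⟨zipAUEs ss ys ts ∪ A, S, T, compOne θ x (.app f (ys.map Tm.var))⟩ :
            Config F).A = zipAUEs ss ys ts ∪ A from rfl, hlabU]
        refine Set.disjoint_left.2 ?_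
        rintro m (hm | hm)
        · exact (hzfr m hm).2.1
        · exact Set.disjoint_left.1 h.disjAS (hAsub hm)
      · rw [show (⟨zipAUEs ss ys ts ∪ A, S, T, compOne θ x (.app f (ys.map Tm.var))⟩ :
            Config F).A = zipAUEs ss ys ts ∪ A from rfl, hlabU]
        refine Set.disjoint_left.2 ?_
        rintro m (hm | hm)
        · exact (hzfr m hm).2.2.1
        · exact Set.disjoint_left.1 h.disjAT (hAsub hm)
  | sol a A S T θ hhead hrel hnotin =>
      have hAsub : labels A ⊆ labels (insert a A) := labels_mono (Set.subset_insert _ _)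
      have halab : a.lab ∈ labels (insert a A) := mem_labels (Set.mem_insert _ _)
      refine ⟨h.finA.subset (Set.subset_insert _ _), h.finS.insert _, h.finT,
        valid_mono (Set.subset_insert _ _) h.validA,
        valid_insert (Set.disjoint_left.1 h.disjAS halab) h.validS, ?_, ?_, ?_, h.finD⟩
      · rw [show (⟨A, insert a S, T, θ⟩ : Config F).S = insert a S from rfl, labels_insert]
        refine Set.disjoint_left.2 ?_
        intro m hm
        rintro (rfl | hc)
        · exact lab_notin h.validA hnotin hm
        · exact Set.disjoint_left.1 h.disjAS (hAsub hm) hc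
      · exact h.disjAT.mono_left hAsub
      · rw [show (⟨A, insert a S, T, θ⟩ : Config F).S = insert a S from rfl, labels_insert]
        refine Set.disjoint_left.2 ?_
        rintro m (rfl | hm)
        · exact Set.disjoint_left.1 h.disjAT halab
        · exact Set.disjoint_left.1 h.disjST hm
  | expLA1 f e t1 t2 x y1 y2 A S T θ hp hnotin hy1 hy2 =>
      have hfr := nextFresh_spec h
      exact inv_exp h (hfr _ (by show nextFresh _ ≤ y1; omega)) (hfr _ (by show nextFresh _ ≤ y2; omega)) (by show y1 ≠ y2; omega)
  | expLA2 f e t1 t2 x y1 y2 A S T θ hp hnotin hy1 hy2 =>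
      have hfr := nextFresh_spec h
      exact inv_exp h (hfr _ (by show nextFresh _ ≤ y2; omega)) (hfr _ (by show nextFresh _ ≤ y1; omega)) (by show y2 ≠ y1; omega)
  | expRA1 f e s1 s2 x y1 y2 A S T θ hp hnotin hy1 hy2 =>
      have hfr := nextFresh_spec h
      exact inv_exp h (hfr _ (by show nextFresh _ ≤ y1; omega)) (hfr _ (by show nextFresh _ ≤ y2; omega)) (by show y1 ≠ y2; omega)
  | expRA2 f e s1 s2 x y1 y2 A S T θ hp hnotin hy1 hy2 =>
      have hfr := nextFresh_spec h
      exact inv_exp h (hfr _ (by show nextFresh _ ≤ y2; omega)) (hfr _ (by show nextFresh _ ≤ y1; omega)) (by show y2 ≠ y1; omega)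
  | mer s t x y S T θ hxy hx hy =>
      have hSsub : (insert (⟨s, y, t⟩ : AUE F) S) ⊆
          insert ⟨s, x, t⟩ (insert ⟨s, y, t⟩ S) := Set.subset_insert _ _
      exact ⟨Set.finite_empty, h.finS.subset hSsub, h.finT,
        fun a ha => absurd ha (Set.notMem_empty a),
        valid_mono hSsub h.validS,
        by simp [labels],
        by simp [labels],
        h.disjST.mono_left (labels_mono hSsub),
        findom_compOne h.finD _ _⟩

end InvStep
section Pull
variable {F : Type} {Sg : AbsSig F}

theorem absEq_app2 {Th : AbsTh Sg} {u1 u2 v1 v2 : Tm F} (h1 : AbsEq Th u1 v1)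
    (h2 : AbsEq Th u2 v2) (f : F) :
    AbsEq Th (.app f [u1, u2]) (.app f [v1, v2]) :=
  AbsEq.congr f (.cons h1 (.cons h2 .nil))

theorem absEq_absL' {Th : AbsTh Sg} {f e : F} (hp : (f, e) ∈ Th.pairs)
    {u1 : Tm F} (h1 : AbsEq Th u1 (.app e [])) (u2 : Tm F) :
    AbsEq Th (.app f [u1, u2]) (.app e []) :=
  (absEq_app2 h1 (AbsEq.refl u2) f).trans (AbsEq.absL u2 hp)

theorem absEq_absR' {Th : AbsTh Sg} {f e : F} (hp : (f, e) ∈ Th.pairs)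
    {u2 : Tm F} (h2 : AbsEq Th u2 (.app e [])) (u1 : Tm F) :
    AbsEq Th (.app f [u1, u2]) (.app e []) :=
  (absEq_app2 (AbsEq.refl u1) h2 f).trans (AbsEq.absR u1 hp)

/-- Transfer of the condition along a step that removes `a0` from `A`. -/
theorem pull_aux {Th : AbsTh Sg} {b : Bool} {a0 : AUE F}
    {A S T A'' S'' T'' : Set (AUE F)} {θ θ'' : ℕ → Tm F} {φ φ' : ℕ → Tm F}
    (hA : A ⊆ A'') (hS : S ⊆ S'') (hT : T ⊆ T'')
    (hvalid : ValidAUEs (insert a0 A)) (hnotin : a0 ∉ A)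
    (hdisjS : Disjoint (labels (insert a0 A)) (labels S))
    (hdisjT : Disjoint (labels (insert a0 A)) (labels T))
    (hagree : ∀ v, v ≠ a0.lab → φ v = φ' v)
    (hx : AbsEq Th (φ a0.lab) (sd b a0))
    (hc : Cond Th b (⟨A'', S'', T'', θ''⟩ : Config F) φ') :
    Cond Th b (⟨insert a0 A, S, T, θ⟩ : Config F) φ := by
  have hlab0 : a0.lab ∈ labels (insert a0 A) := mem_labels (Set.mem_insert _ _)
  constructor
  · rintro a (ha | ha)
    · rcases ha with rfl | ha
      · exact hx
      · have hne : a.lab ≠ a0.lab := by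
          intro hq
          exact hnotin
            ((hvalid a (Set.mem_insert_of_mem _ ha) a0 (Set.mem_insert _ _) hq) ▸ ha)
        rw [hagree _ hne]
        exact hc.1 a (Set.mem_union_left _ (hA ha))
    · have hne : a.lab ≠ a0.lab := by
        intro hq
        exact Set.disjoint_left.1 hdisjS (hq ▸ hlab0) (mem_labels ha)
      rw [hagree _ hne]
      exact hc.1 a (Set.mem_union_right _ (hS ha))
  · intro a ha hstar
    have hne : a.lab ≠ a0.lab := by
      intro hq
      exact Set.disjoint_left.1 hdisjT (hq ▸ hlab0) (mem_labels ha)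
    rw [hagree _ hne]
    exact hc.2 a (hT ha) hstar

theorem single_self (x : ℕ) (t : Tm F) : single x t x = t := by simp [single]

theorem single_other {x v : ℕ} (hne : v ≠ x) (t : Tm F) : single x t v = .var v := by
  simp [single, hne]

theorem pull {Th : AbsTh Sg} {C C' : Config F} (h : Inv C) (hs : Step Th C C')
    (b : Bool) (φ' : ℕ → Tm F) (hc : Cond Th b C' φ') :
    ∃ φ, Cond Th b C φ ∧ ∀ z, (C.θ z).subst φ = (C'.θ z).subst φ' := by
  cases hs with
  | dec f ss ts x ys A S T θ hlen hnotin hys =>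
      set t0 : Tm F := .app f (ys.map Tm.var) with ht0
      have hyslen : ys.length = ss.length := by subst hys; simp
      refine ⟨fun v => (single x t0 v).subst φ', ?_, fun z => (subst_subst _ _ _).symm⟩
      have hφx : (single x t0 x).subst φ' = .app f (ys.map φ') := by
        rw [single_self, ht0, subst_app, List.map_map]
        exact congrArg _ (List.map_congr_left fun y _ => subst_var φ' y)
      have hkey : ∀ us : List (Tm F), us.length = ss.length →
          (∀ (i : ℕ) (h1 : i < ys.length) (h2 : i < us.length),
            AbsEq Th (φ' (ys.get ⟨i, h1⟩)) (us.get ⟨i, h2⟩)) →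
          AbsEq Th (.app f (ys.map φ')) (.app f us) := by
        intro us hus hpt
        refine AbsEq.congr f (List.forall₂_of_length_eq_of_get (by simp [hyslen, hus]) ?_)
        intro i h1 h2
        have h1' : i < ys.length := by simpa using h1
        have := hpt i h1' h2
        simpa [List.getElem_map] using this
      refine pull_aux (Set.subset_union_right) (le_refl S) (le_refl T)
        h.validA hnotin h.disjAS h.disjAT
        (fun v hv => by rw [single_other hv, subst_var]) ?_ hc
      show AbsEq Th ((single x t0 x).subst φ') (sd b (⟨.app f ss, x, .app f ts⟩ : AUE F))
      rw [hφx]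
      have hzmem : ∀ (i : ℕ) (h1 : i < ss.length) (h2 : i < ys.length) (h3 : i < ts.length),
          AbsEq Th (φ' (ys.get ⟨i, h2⟩))
            (sd b (⟨ss.get ⟨i, h1⟩, ys.get ⟨i, h2⟩, ts.get ⟨i, h3⟩⟩ : AUE F)) := by
        intro i h1 h2 h3
        exact hc.1 _ (Set.mem_union_left _ (Set.mem_union_left _ ⟨i, h1, h2, h3, rfl⟩))
      cases b
      · show AbsEq Th (.app f (ys.map φ')) (.app f ts)
        refine hkey ts hlen.symm ?_
        intro i h1 h2
        have h1' : i < ss.length := by omega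
        simpa using hzmem i h1' h1 h2
      · show AbsEq Th (.app f (ys.map φ')) (.app f ss)
        refine hkey ss rfl ?_
        intro i h1 h2
        have h3 : i < ts.length := by omega
        simpa using hzmem i h2 h1 h3
  | sol a A S T θ hhead hrel hnotin =>
      refine ⟨φ', ⟨?_, ?_⟩, fun z => rfl⟩
      · rintro c (hca | hca)
        · rcases hca with rfl | hca
          · exact hc.1 c (Set.mem_union_right _ (Set.mem_insert _ _))
          · exact hc.1 c (Set.mem_union_left _ hca)
        · exact hc.1 c (Set.mem_union_right _ (Set.mem_insert_of_mem _ hca))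
      · exact hc.2
  | expLA1 f e t1 t2 x y1 y2 A S T θ hp hnotin hy1 hy2 =>
      set t0 : Tm F := .app f [.var y1, .var y2] with ht0
      refine ⟨fun v => (single x t0 v).subst φ', ?_, fun z => (subst_subst _ _ _).symm⟩
      refine pull_aux (Set.subset_insert _ _) (le_refl S) (Set.subset_insert _ _)
        h.validA hnotin h.disjAS h.disjAT
        (fun v hv => by rw [single_other hv, subst_var]) ?_ hc
      show AbsEq Th ((single x t0 x).subst φ')
        (sd b (⟨.app e [], x, .app f [t1, t2]⟩ : AUE F))
      have hφx : (single x t0 x).subst φ' = .app f [φ' y1, φ' y2] := by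
        rw [single_self, ht0, subst_app]
        simp
      rw [hφx]
      have h1 := hc.1 ⟨.app e [], y1, t1⟩ (Set.mem_union_left _ (Set.mem_insert _ _))
      cases b
      · have h2 := hc.2 ⟨starTm Sg, y2, t2⟩ (Set.mem_insert _ _) rfl
        exact absEq_app2 h1 h2 f
      · exact absEq_absL' hp h1 (φ' y2)
  | expLA2 f e t1 t2 x y1 y2 A S T θ hp hnotin hy1 hy2 =>
      set t0 : Tm F := .app f [.var y1, .var y2] with ht0
      refine ⟨fun v => (single x t0 v).subst φ', ?_, fun z => (subst_subst _ _ _).symm⟩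
      refine pull_aux (Set.subset_insert _ _) (le_refl S) (Set.subset_insert _ _)
        h.validA hnotin h.disjAS h.disjAT
        (fun v hv => by rw [single_other hv, subst_var]) ?_ hc
      show AbsEq Th ((single x t0 x).subst φ')
        (sd b (⟨.app e [], x, .app f [t1, t2]⟩ : AUE F))
      have hφx : (single x t0 x).subst φ' = .app f [φ' y1, φ' y2] := by
        rw [single_self, ht0, subst_app]
        simp
      rw [hφx]
      have h2 := hc.1 ⟨.app e [], y2, t2⟩ (Set.mem_union_left _ (Set.mem_insert _ _))
      cases b
      · have h1 := hc.2 ⟨starTm Sg, y1, t1⟩ (Set.mem_insert _ _) rfl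
        exact absEq_app2 h1 h2 f
      · exact absEq_absR' hp h2 (φ' y1)
  | expRA1 f e s1 s2 x y1 y2 A S T θ hp hnotin hy1 hy2 =>
      set t0 : Tm F := .app f [.var y1, .var y2] with ht0
      refine ⟨fun v => (single x t0 v).subst φ', ?_, fun z => (subst_subst _ _ _).symm⟩
      refine pull_aux (Set.subset_insert _ _) (le_refl S) (Set.subset_insert _ _)
        h.validA hnotin h.disjAS h.disjAT
        (fun v hv => by rw [single_other hv, subst_var]) ?_ hc
      show AbsEq Th ((single x t0 x).subst φ')
        (sd b (⟨.app f [s1, s2], x, .app e []⟩ : AUE F))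
      have hφx : (single x t0 x).subst φ' = .app f [φ' y1, φ' y2] := by
        rw [single_self, ht0, subst_app]
        simp
      rw [hφx]
      have h1 := hc.1 ⟨s1, y1, .app e []⟩ (Set.mem_union_left _ (Set.mem_insert _ _))
      cases b
      · exact absEq_absL' hp h1 (φ' y2)
      · have h2 := hc.2 ⟨s2, y2, starTm Sg⟩ (Set.mem_insert _ _) rfl
        exact absEq_app2 h1 h2 f
  | expRA2 f e s1 s2 x y1 y2 A S T θ hp hnotin hy1 hy2 =>
      set t0 : Tm F := .app f [.var y1, .var y2] with ht0
      refine ⟨fun v => (single x t0 v).subst φ', ?_, fun z => (subst_subst _ _ _).symm⟩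
      refine pull_aux (Set.subset_insert _ _) (le_refl S) (Set.subset_insert _ _)
        h.validA hnotin h.disjAS h.disjAT
        (fun v hv => by rw [single_other hv, subst_var]) ?_ hc
      show AbsEq Th ((single x t0 x).subst φ')
        (sd b (⟨.app f [s1, s2], x, .app e []⟩ : AUE F))
      have hφx : (single x t0 x).subst φ' = .app f [φ' y1, φ' y2] := by
        rw [single_self, ht0, subst_app]
        simp
      rw [hφx]
      have h2 := hc.1 ⟨s2, y2, .app e []⟩ (Set.mem_union_left _ (Set.mem_insert _ _))
      cases b
      · exact absEq_absR' hp h2 (φ' y1)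
      · have h1 := hc.2 ⟨s1, y1, starTm Sg⟩ (Set.mem_insert _ _) rfl
        exact absEq_app2 h1 h2 f
  | mer s t x y S T θ hxy hx hy =>
      refine ⟨fun v => (single x (.var y) v).subst φ', ⟨?_, ?_⟩,
        fun z => (subst_subst _ _ _).symm⟩
      · rintro a (ha | ha)
        · exact absurd ha (Set.notMem_empty a)
        · rcases ha with rfl | ha
          · show AbsEq Th ((single x (.var y) x).subst φ') (sd b (⟨s, x, t⟩ : AUE F))
            rw [single_self, subst_var]
            have := hc.1 ⟨s, y, t⟩ (Set.mem_union_right _ (Set.mem_insert _ _))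
            cases b
            · exact this
            · exact this
          · have hne : a.lab ≠ x := by
              intro hq
              have ha1 : (⟨s, x, t⟩ : AUE F) ∉ insert (⟨s, y, t⟩ : AUE F) S := by
                rintro (hq1 | hq1)
                · exact hxy (congrArg AUE.lab hq1)
                · exact hx hq1
              exact ha1 ((h.validS a (Set.mem_insert_of_mem _ ha)
                ⟨s, x, t⟩ (Set.mem_insert _ _) hq) ▸ ha)
            show AbsEq Th ((single x (.var y) a.lab).subst φ') (sd b a)
            rw [single_other hne, subst_var]
            exact hc.1 a (Set.mem_union_right _ ha)
      · intro a ha hstar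
        have hne : a.lab ≠ x := by
          intro hq
          refine Set.disjoint_left.1 h.disjST ?_ (mem_labels ha)
          rw [hq]
          exact mem_labels (Set.mem_insert _ _)
        show AbsEq Th ((single x (.var y) a.lab).subst φ') (sd b a)
        rw [single_other hne, subst_var]
        exact hc.2 a ha hstar

theorem star_pull {Th : AbsTh Sg} {C C' : Config F} (h0 : Inv C)
    (hder : Relation.ReflTransGen (Step Th) C C') :
    Inv C' ∧ ∀ (b : Bool) (φ' : ℕ → Tm F), Cond Th b C' φ' →
      ∃ φ, Cond Th b C φ ∧ ∀ z, (C.θ z).subst φ = (C'.θ z).subst φ' := by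
  induction hder with
  | refl => exact ⟨h0, fun b φ' hφ' => ⟨φ', hφ', fun z => rfl⟩⟩
  | tail hmid hstep ih =>
      refine ⟨inv_step ih.1 hstep, fun b φ' hφ' => ?_⟩
      obtain ⟨φm, hφm, heqm⟩ := pull ih.1 hstep b φ' hφ'
      obtain ⟨φ, hφ, heq⟩ := ih.2 b φm hφm
      exact ⟨φ, hφ, fun z => (heq z).trans (heqm z)⟩

end Pull
theorem moregen_side {F : Type} {Sg : AbsSig F} (Th : AbsTh Sg)
    (C0 Cn : Config F) (h0 : IsConfig Th C0)
    (hder : Relation.ReflTransGen (Step Th) C0 Cn)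
    (hAn : Cn.A = ∅)
    (a : AUE F) (ha : a ∈ C0.A ∪ C0.S)
    (τ : ℕ → Tm F) (hτ : τ ∈ Psi Th Cn.T Cn.S) (b : Bool) :
    MoreGen Th ((Cn.θ a.lab).subst τ) (sd b a) := by
  have hInv0 : Inv C0 := ⟨h0.finA, h0.finS, h0.finT, h0.validA, h0.validS,
    h0.disjAS, h0.disjAT, h0.disjST, h0.finDom⟩
  obtain ⟨hInvn, hpull⟩ := star_pull hInv0 hder
  -- the final substitution: σ_S for the left side, ρ_S for the right side
  set W : ℕ → Tm F := if b then sigmaW Cn.S else rhoW Cn.S with hW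
  have hWdom : FinDom W := by
    refine (hInvn.finS.image AUE.lab).subset ?_
    intro y hy
    by_contra hny
    apply hy
    have hne : ¬ ∃ c, c ∈ Cn.S ∧ c.lab = y := by
      rintro ⟨c, hc, rfl⟩
      exact hny (mem_labels hc)
    cases b <;> simp only [hW] <;>
      first
        | (show rhoW Cn.S y = .var y; rw [rhoW, dif_neg hne])
        | (show sigmaW Cn.S y = .var y; rw [sigmaW, dif_neg hne])
  have hWS : ∀ c ∈ Cn.S, W c.lab = sd b c := by
    intro c hc
    have hex : ∃ d, d ∈ Cn.S ∧ d.lab = c.lab := ⟨c, hc, rfl⟩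
    have hcc : hex.choose = c :=
      hInvn.validS _ hex.choose_spec.1 _ hc hex.choose_spec.2
    cases b
    · show rhoW Cn.S c.lab = c.rhs
      rw [rhoW, dif_pos hex, hcc]
    · show sigmaW Cn.S c.lab = c.lhs
      rw [sigmaW, dif_pos hex, hcc]
  have hcond : Cond Th b Cn (fun v => (τ v).subst W) := by
    constructor
    · rintro c (hcA | hcS)
      · rw [hAn] at hcA
        exact absurd hcA (Set.notMem_empty c)
      · have hlabT : c.lab ∉ labels Cn.T :=
          Set.disjoint_left.1 hInvn.disjST (mem_labels hcS)
        have hτc : τ c.lab = .var c.lab := by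
          have hd : c.lab ∉ Dom τ := by rw [hτ.1]; exact hlabT
          simpa [Dom] using hd
        show AbsEq Th ((τ c.lab).subst W) (sd b c)
        rw [hτc, subst_var, hWS c hcS]
        exact AbsEq.refl _
    · intro c hcT hstar
      show AbsEq Th ((τ c.lab).subst W) (sd b c)
      cases b
      · -- b = false : rhs side, trigger when lhs = ⋆
        have := (hτ.2 c hcT).1 hstar
        exact this.1
      · have := (hτ.2 c hcT).2 hstar
        exact this.1
  obtain ⟨φ0, hφc, hφeq⟩ := hpull b _ hcond
  have hx0 : C0.θ a.lab = .var a.lab := by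
    have hd : a.lab ∉ Dom C0.θ := by
      cases ha with
      | inl hh => exact Set.disjoint_left.1 h0.disjAD (mem_labels hh)
      | inr hh => exact Set.disjoint_left.1 h0.disjSD (mem_labels hh)
    simpa [Dom] using hd
  have h1 := hφeq a.lab
  rw [hx0, subst_var] at h1
  have h2 : ((Cn.θ a.lab).subst τ).subst W = φ0 a.lab := by
    rw [subst_subst]
    exact h1.symm
  exact ⟨W, hWdom, h2 ▸ hφc.1 a ha⟩

/-- Theorem 3, soundness with abstraction substitutions: for a
derivation `⟨A₀;S₀;T₀;θ₀⟩ ⟹* ⟨∅;Sₙ;Tₙ;θₙ⟩` to a final configuration and any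
`s ≜_x t ∈ A₀ ∪ S₀`, the term `xθₙτ` is an `Abs`-generalization of `s` and `t`
for every abstraction substitution `τ ∈ Ψ(Tₙ,Sₙ)`. -/
theorem aunif_soundness_tau {F : Type} {Sg : AbsSig F} (Th : AbsTh Sg)
    (C0 Cn : Config F) (h0 : IsConfig Th C0)
    (hder : Relation.ReflTransGen (Step Th) C0 Cn)
    (hAn : Cn.A = ∅) (hfin : Final Th Cn)
    (a : AUE F) (ha : a ∈ C0.A ∪ C0.S)
    (τ : ℕ → Tm F) (hτ : τ ∈ Psi Th Cn.T Cn.S) :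
    Gen Th ((Cn.θ a.lab).subst τ) a.lhs a.rhs := by
  exact ⟨moregen_side Th C0 Cn h0 hder hAn a ha τ hτ true,
    moregen_side Th C0 Cn h0 hder hAn a ha τ hτ false⟩

end AbsAU
end
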